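/- Let q be an odd prime power, let i, j be positive integers with gcd(ij, q-1) = 1, and let a, b ∈ F_q^* be such that 2a and 2b are nonzero squares in F_q. Then f(x) = a·x^i·(x^((q-1)/2) + 1) - b·x^j·(x^((q-1)/2) - 1) permutes F_q. -/

import Mathlib

/-- Hermite's example: if `gcd(ij, q-1) = 1` and `2a`, `2b` are nonzero squares, then
`a x^i (x^((q-1)/2) + 1) - b x^j (x^((q-1)/2) - 1)` permutes `F_q` (`q` odd). -/
theorem stmt_15 (F : Type*) [Field F] [Fintype F] (hodd : Odd (Fintype.card F))
    (i j : ℕ) (hi : 0 < i) (hj : 0 < j)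
    (hgcd : Nat.gcd (i * j) (Fintype.card F - 1) = 1)
    (a b : F) (ha : a ≠ 0) (hb : b ≠ 0)
    (ha2 : ∃ y : F, y ≠ 0 ∧ y ^ 2 = 2 * a)
    (hb2 : ∃ y : F, y ≠ 0 ∧ y ^ 2 = 2 * b) :
    Function.Bijective
      (fun x : F => a * x ^ i * (x ^ ((Fintype.card F - 1) / 2) + 1)
        - b * x ^ j * (x ^ ((Fintype.card F - 1) / 2) - 1)) := by
  classical
  set q := Fintype.card F with hq
  set e := (q - 1) / 2 with he
  obtain ⟨c, hc, hc2⟩ := ha2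
  obtain ⟨d, hd, hd2⟩ := hb2
  have h2a : (2 : F) * a ≠ 0 := hc2 ▸ pow_ne_zero 2 hc
  have h2b : (2 : F) * b ≠ 0 := hd2 ▸ pow_ne_zero 2 hd
  have h2 : (2 : F) ≠ 0 := fun h => h2a (by rw [h, zero_mul])
  have hne : (-1 : F) ≠ 1 := by
    intro h
    apply h2
    have h1 : (1 : F) + 1 = 0 := by linear_combination -h
    calc (2:F) = 1 + 1 := by norm_num
    _ = 0 := h1
  obtain ⟨k, hk⟩ := hodd
  have h2e : 2 * e = q - 1 := by omega
  -- x^(q-1) = 1 for x ≠ 0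
  have hu : ∀ x : F, x ≠ 0 → x ^ (q - 1) = 1 := fun x hx =>
    FiniteField.pow_card_sub_one_eq_one x hx
  -- x^e = ±1
  have hpm : ∀ x : F, x ≠ 0 → x ^ e = 1 ∨ x ^ e = -1 := by
    intro x hx
    have : x ^ e * x ^ e = 1 := by
      rw [← pow_add]
      have : e + e = q - 1 := by omega
      rw [this]; exact hu x hx
    exact mul_self_eq_one_iff.mp this
  -- oddness of i and j
  have hjodd : Odd j := by
    rcases Nat.even_or_odd j with hje | hjo
    · exfalso
      have h1 : 2 ∣ i * j := Dvd.dvd.mul_left hje.two_dvd i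
      have h2' : 2 ∣ q - 1 := by omega
      have := Nat.dvd_gcd h1 h2'
      rw [hgcd] at this
      omega
    · exact hjo
  -- coprimality
  have hci : Nat.Coprime i (q - 1) :=
    Nat.Coprime.coprime_dvd_left (dvd_mul_right i j) hgcd
  have hcj : Nat.Coprime j (q - 1) :=
    Nat.Coprime.coprime_dvd_left (dvd_mul_left j i) hgcd
  -- power map injectivity
  have hpowinj : ∀ n : ℕ, Nat.Coprime n (q - 1) → ∀ x y : F, x ≠ 0 → y ≠ 0 →
      x ^ n = y ^ n → x = y := by
    intro n hn x y hx hy hxy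
    set u := Units.mk0 x hx
    set v := Units.mk0 y hy
    have huv : u ^ n = v ^ n := by
      ext; simpa [u, v] using hxy
    have h1 : (u * v⁻¹) ^ n = 1 := by
      rw [mul_pow, huv, inv_pow, mul_inv_cancel]
    have hd1 : orderOf (u * v⁻¹) ∣ n := orderOf_dvd_of_pow_eq_one h1
    have hd2 : orderOf (u * v⁻¹) ∣ q - 1 := by
      have := orderOf_dvd_card (G := Fˣ) (x := u * v⁻¹)
      rwa [Fintype.card_units] at this
    have : orderOf (u * v⁻¹) ∣ 1 := Nat.dvd_gcd hd1 hd2 |>.trans (by rw [hn])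
    have : u * v⁻¹ = 1 := orderOf_eq_one_iff.mp (Nat.dvd_one.mp this)
    have : u = v := by
      have := mul_eq_one_iff_eq_inv.mp this
      simpa using this
    have := congrArg Units.val this
    simpa [u, v] using this
  -- (2a)^e = 1, (2b)^e = 1
  have h2ae : ((2 : F) * a) ^ e = 1 := by
    rw [← hc2, ← pow_mul, h2e]; exact hu c hc
  have h2be : ((2 : F) * b) ^ e = 1 := by
    rw [← hd2, ← pow_mul, h2e]; exact hu d hd
  set f : F → F := fun x : F => a * x ^ i * (x ^ e + 1) - b * x ^ j * (x ^ e - 1)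
    with hf
  have hf0 : f 0 = 0 := by
    simp [hf, zero_pow hi.ne', zero_pow hj.ne']
  have hfs : ∀ x : F, x ^ e = 1 → f x = (2 * a) * x ^ i := by
    intro x hx; simp only [hf, hx]; ring
  have hfn : ∀ x : F, x ^ e = -1 → f x = (2 * b) * x ^ j := by
    intro x hx; simp only [hf, hx]; ring
  -- value of f^e on nonzero points
  have hfse : ∀ x : F, x ≠ 0 → x ^ e = 1 → (f x) ^ e = 1 := by
    intro x hx hxe
    rw [hfs x hxe, mul_pow, h2ae, one_mul, ← pow_mul, mul_comm i e, pow_mul, hxe,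
      one_pow]
  have hfne : ∀ x : F, x ≠ 0 → x ^ e = -1 → (f x) ^ e = -1 := by
    intro x hx hxe
    rw [hfn x hxe, mul_pow, h2be, one_mul, ← pow_mul, mul_comm j e, pow_mul, hxe,
      hjodd.neg_one_pow]
  have hfnz : ∀ x : F, x ≠ 0 → f x ≠ 0 := by
    intro x hx
    rcases hpm x hx with hxe | hxe
    · rw [hfs x hxe]; exact mul_ne_zero h2a (pow_ne_zero i hx)
    · rw [hfn x hxe]; exact mul_ne_zero h2b (pow_ne_zero j hx)
  have hinj : Function.Injective f := by
    intro x y hxy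
    by_cases hx : x = 0
    · subst hx
      by_contra hy0
      rw [hf0] at hxy
      exact hfnz y (fun h => hy0 h.symm) hxy.symm
    by_cases hy : y = 0
    · subst hy
      rw [hf0] at hxy
      exact absurd hxy (hfnz x hx)
    rcases hpm x hx with hxe | hxe <;> rcases hpm y hy with hye | hye
    · have := hxy
      rw [hfs x hxe, hfs y hye] at this
      exact hpowinj i hci x y hx hy (mul_left_cancel₀ h2a this)
    · exfalso
      have h1 := hfse x hx hxe
      have h2' := hfne y hy hye
      rw [hxy, h2'] at h1
      exact hne h1
    · exfalso
      have h1 := hfne x hx hxe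
      have h2' := hfse y hy hye
      rw [hxy, h2'] at h1
      exact hne h1.symm
    · have := hxy
      rw [hfn x hxe, hfn y hye] at this
      exact hpowinj j hcj x y hx hy (mul_left_cancel₀ h2b this)
  exact Finite.injective_iff_bijective.mp hinj
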